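/- Let n ≥ 3 and let G be a subgroup of the symmetric group S_n containing the 3-cycle (1,2,3). Then G is a Jacobi subset of S_n. -/

import Mathlib

/-- The left-normed Lie bracket `[a₁,…,aₘ]` of a list of elements of a Lie ring,
defined by `[a₁] = a₁` and `[a₁,…,aₘ] = [[a₁,…,a_{m-1}], aₘ]` (and `0` for the empty list). -/
def lieWord {L : Type*} [LieRing L] : List L → L
  | [] => 0
  | x :: xs => xs.foldl (fun a b => ⁅a, b⁆) x

/-- A subset `T ⊆ Sₙ` is Jacobi if `∑_{σ ∈ T} [a_{σ(1)},…,a_{σ(n)}] = 0` for all elements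
`a₁,…,aₙ` of any Lie ring (= Lie algebra over `ℤ`). -/
def IsJacobi {n : ℕ} (T : Set (Equiv.Perm (Fin n))) : Prop :=
  ∀ (L : Type) [LieRing L], ∀ a : Fin n → L,
    ∑ᶠ σ ∈ T, lieWord (List.ofFn fun i => a (σ i)) = 0

private lemma foldl_br_zero {L : Type*} [LieRing L] (l : List L) :
    l.foldl (fun a b => ⁅a, b⁆) 0 = 0 := by
  induction l with
  | nil => rfl
  | cons b t ih => simpa using ih

private lemma foldl_br_add3 {L : Type*} [LieRing L] (l : List L) (u v w : L) :
    l.foldl (fun a b => ⁅a, b⁆) u + l.foldl (fun a b => ⁅a, b⁆) v +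
      l.foldl (fun a b => ⁅a, b⁆) w = l.foldl (fun a b => ⁅a, b⁆) (u + v + w) := by
  induction l generalizing u v w with
  | nil => rfl
  | cons b t ih => simp only [List.foldl_cons, ih, add_lie]

private lemma jacobi3 {L : Type*} [LieRing L] (x y z : L) :
    ⁅⁅x, y⁆, z⁆ + ⁅⁅y, z⁆, x⁆ + ⁅⁅z, x⁆, y⁆ = 0 := by
  have h := lie_jacobi x y z
  have h2 : ⁅z, ⁅x, y⁆⁆ + ⁅x, ⁅y, z⁆⁆ + ⁅y, ⁅z, x⁆⁆ = 0 := by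
    rw [← h]; abel
  calc ⁅⁅x, y⁆, z⁆ + ⁅⁅y, z⁆, x⁆ + ⁅⁅z, x⁆, y⁆
      = -(⁅z, ⁅x, y⁆⁆ + ⁅x, ⁅y, z⁆⁆ + ⁅y, ⁅z, x⁆⁆) := by
        rw [← lie_skew ⁅x, y⁆ z, ← lie_skew ⁅y, z⁆ x, ← lie_skew ⁅z, x⁆ y]; abel
    _ = 0 := by rw [h2, neg_zero]

private lemma ofFn_eq_cons3 {α : Type*} {m : ℕ} (f : Fin (m + 3) → α) :
    List.ofFn f = f ⟨0, by omega⟩ :: f ⟨1, by omega⟩ :: f ⟨2, by omega⟩ ::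
      List.ofFn (fun i : Fin m => f ⟨(i : ℕ) + 3, by omega⟩) := by
  rw [List.ofFn_succ, List.ofFn_succ, List.ofFn_succ]
  congr 1

private lemma key_triple {m : ℕ} {L : Type*} [LieRing L] (a : Fin (m + 3) → L)
    (σ : Equiv.Perm (Fin (m + 3))) :
    lieWord (List.ofFn fun i => a (σ i)) +
      lieWord (List.ofFn fun i => a ((σ * (Equiv.swap (⟨0, by omega⟩ : Fin (m+3)) ⟨2, by omega⟩ *
        Equiv.swap (⟨0, by omega⟩ : Fin (m+3)) ⟨1, by omega⟩)) i)) +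
      lieWord (List.ofFn fun i => a ((σ * (Equiv.swap (⟨0, by omega⟩ : Fin (m+3)) ⟨2, by omega⟩ *
        Equiv.swap (⟨0, by omega⟩ : Fin (m+3)) ⟨1, by omega⟩) *
        (Equiv.swap (⟨0, by omega⟩ : Fin (m+3)) ⟨2, by omega⟩ *
        Equiv.swap (⟨0, by omega⟩ : Fin (m+3)) ⟨1, by omega⟩)) i)) = 0 := by
  set c : Equiv.Perm (Fin (m+3)) := Equiv.swap (⟨0, by omega⟩ : Fin (m+3)) ⟨2, by omega⟩ *
        Equiv.swap (⟨0, by omega⟩ : Fin (m+3)) ⟨1, by omega⟩ with hc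
  have hc0 : c ⟨0, by omega⟩ = ⟨1, by omega⟩ := by
    simp [hc, Equiv.swap_apply_def, Fin.ext_iff]
  have hc1 : c ⟨1, by omega⟩ = ⟨2, by omega⟩ := by
    simp [hc, Equiv.swap_apply_def, Fin.ext_iff]
  have hc2 : c ⟨2, by omega⟩ = ⟨0, by omega⟩ := by
    simp [hc, Equiv.swap_apply_def, Fin.ext_iff]
  have hcfix : ∀ x : Fin (m+3), 3 ≤ (x : ℕ) → c x = x := by
    intro x hx
    have e0 : x ≠ (⟨0, by omega⟩ : Fin (m+3)) := by intro h; rw [h] at hx; simp at hx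
    have e1 : x ≠ (⟨1, by omega⟩ : Fin (m+3)) := by intro h; rw [h] at hx; simp at hx
    have e2 : x ≠ (⟨2, by omega⟩ : Fin (m+3)) := by intro h; rw [h] at hx; simp at hx
    simp only [hc, Equiv.Perm.mul_apply, Equiv.swap_apply_of_ne_of_ne e0 e1,
      Equiv.swap_apply_of_ne_of_ne e0 e2]
  have hrest : ∀ i : Fin m, c ⟨(i : ℕ) + 3, by omega⟩ = ⟨(i : ℕ) + 3, by omega⟩ :=
    fun i => hcfix _ (by simp)
  rw [ofFn_eq_cons3, ofFn_eq_cons3, ofFn_eq_cons3]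
  simp only [Equiv.Perm.mul_apply, hc0, hc1, hc2, hrest, lieWord, List.foldl_cons]
  rw [foldl_br_add3, jacobi3, foldl_br_zero]

set_option maxHeartbeats 4000000 in
/-- If `n ≥ 3` and `G` is a subgroup of `Sₙ` containing the 3-cycle `(1,2,3)`
(0-indexed: the cycle `0 ↦ 1 ↦ 2 ↦ 0`, written as `(0 2) * (0 1)`), then `G` is Jacobi. -/
theorem subgroup_isJacobi_of_threeCycle_mem {n : ℕ} (hn : 3 ≤ n)
    (G : Subgroup (Equiv.Perm (Fin n)))
    (hG : Equiv.swap (⟨0, by omega⟩ : Fin n) ⟨2, by omega⟩ *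
            Equiv.swap (⟨0, by omega⟩ : Fin n) ⟨1, by omega⟩ ∈ G) :
    IsJacobi (G : Set (Equiv.Perm (Fin n))) := by
  intro L _ a
  obtain ⟨m, rfl⟩ : ∃ m, n = m + 3 := ⟨n - 3, by omega⟩
  classical
  set c : Equiv.Perm (Fin (m + 3)) := Equiv.swap (⟨0, by omega⟩ : Fin (m+3)) ⟨2, by omega⟩ *
      Equiv.swap (⟨0, by omega⟩ : Fin (m+3)) ⟨1, by omega⟩ with hc
  set F : Equiv.Perm (Fin (m + 3)) → L := fun σ => lieWord (List.ofFn fun i => a (σ i)) with hF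
  -- pointwise facts about `c`
  have hc0 : c ⟨0, by omega⟩ = ⟨1, by omega⟩ := by
    simp [hc, Equiv.swap_apply_def, Fin.ext_iff]
  have hc1 : c ⟨1, by omega⟩ = ⟨2, by omega⟩ := by
    simp [hc, Equiv.swap_apply_def, Fin.ext_iff]
  have hc2 : c ⟨2, by omega⟩ = ⟨0, by omega⟩ := by
    simp [hc, Equiv.swap_apply_def, Fin.ext_iff]
  have hcfix : ∀ x : Fin (m+3), 3 ≤ (x : ℕ) → c x = x := by
    intro x hx
    have e0 : x ≠ (⟨0, by omega⟩ : Fin (m+3)) := by intro h; rw [h] at hx; simp at hx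
    have e1 : x ≠ (⟨1, by omega⟩ : Fin (m+3)) := by intro h; rw [h] at hx; simp at hx
    have e2 : x ≠ (⟨2, by omega⟩ : Fin (m+3)) := by intro h; rw [h] at hx; simp at hx
    simp only [hc, Equiv.Perm.mul_apply, Equiv.swap_apply_of_ne_of_ne e0 e1,
      Equiv.swap_apply_of_ne_of_ne e0 e2]
  have hccc : ∀ x, c (c (c x)) = x := by
    intro x
    rcases Nat.lt_or_ge (x : ℕ) 3 with h | h
    · have : x = ⟨0, by omega⟩ ∨ x = ⟨1, by omega⟩ ∨ x = ⟨2, by omega⟩ := by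
        simp only [Fin.ext_iff]; omega
      rcases this with h' | h' | h' <;> simp only [h', hc0, hc1, hc2]
    · simp only [hcfix x h]
  have hcube : c * c * c = 1 := by
    ext x
    exact congrArg Fin.val (by simpa [Equiv.Perm.mul_apply] using hccc x)
  have hcne : c ≠ 1 := by
    intro h
    simp only [h, Equiv.Perm.one_apply, Fin.ext_iff] at hc0
    omega
  have hpow : c ^ 3 = 1 := by
    rw [pow_succ, pow_succ, pow_one]; exact hcube
  have ho : orderOf c = 3 := by
    have hdvd := orderOf_dvd_of_pow_eq_one hpow
    have hne : orderOf c ≠ 1 := by simpa [orderOf_eq_one_iff] using hcne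
    rcases (Nat.prime_three).eq_one_or_self_of_dvd _ hdvd with h | h
    · exact absurd h hne
    · exact h
  -- move to a sum over the subgroup `G`
  rw [← finsum_set_coe_eq_finsum_mem, finsum_eq_sum_of_fintype]
  let e0 : (↥G) ≃ ↥(G : Set (Equiv.Perm (Fin (m+3)))) :=
    Equiv.subtypeEquivRight (fun x => (SetLike.mem_coe).symm)
  rw [← Equiv.sum_comp e0 (fun σ => F ↑σ)]
  -- group elements of `G` by cosets of the cyclic subgroup generated by `c`
  set cG : ↥G := ⟨c, hG⟩ with hcG
  have hoG : orderOf cG = 3 := by rw [← Subgroup.orderOf_coe]; exact ho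
  set H : Subgroup ↥G := Subgroup.zpowers cG with hH
  rw [← Fintype.sum_fiberwise (QuotientGroup.mk (s := H))
    (fun σ : ↥G => F ↑((e0 σ) : Equiv.Perm (Fin (m+3))))]
  apply Finset.sum_eq_zero
  intro q _
  have hfin : IsOfFinOrder cG := orderOf_pos_iff.mp (by rw [hoG]; norm_num)
  let e3 : ↥H ≃ {σ : ↥G // QuotientGroup.mk σ = q} :=
    { toFun := fun h => ⟨Quotient.out q * ↑h, by
        rw [QuotientGroup.mk_mul_of_mem _ h.2]; exact QuotientGroup.out_eq' q⟩
      invFun := fun σ => ⟨(Quotient.out q)⁻¹ * ↑σ, by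
        exact (QuotientGroup.eq).mp (by rw [QuotientGroup.out_eq' q, σ.2])⟩
      left_inv := fun h => by
        apply Subtype.ext; apply Subtype.ext
        simp [inv_mul_cancel_left]
      right_inv := fun σ => by
        apply Subtype.ext
        simp [mul_inv_cancel_left] }
  let E : Fin 3 ≃ {σ : ↥G // QuotientGroup.mk σ = q} :=
    ((finCongr hoG.symm).trans (finEquivZPowers hfin)).trans e3
  rw [← Equiv.sum_comp E (fun σ => F ↑((e0 ↑σ) : Equiv.Perm (Fin (m+3))))]
  have hE1 : ∀ i : Fin 3, ((E i) : ↥G) = Quotient.out q * (cG ^ (i : ℕ)) := by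
    intro i
    show ((e3 ((finEquivZPowers hfin) ((finCongr hoG.symm) i))) : ↥G) = _
    rw [finEquivZPowers_apply]
    rfl
  have hEval : ∀ i : Fin 3, ((e0 ((E i) : ↥G)) : Equiv.Perm (Fin (m+3)))
      = ↑(Quotient.out q) * c ^ (i : ℕ) := by
    intro i
    have h0 : ((e0 ((E i) : ↥G)) : Equiv.Perm (Fin (m+3)))
        = (((E i) : ↥G) : Equiv.Perm (Fin (m+3))) := by
      with_unfolding_all rfl
    rw [h0, hE1 i]
    push_cast
    rfl
  rw [Fin.sum_univ_three]
  rw [hEval 0, hEval 1, hEval 2]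
  simp only [Fin.val_zero, Fin.val_one, Fin.val_two, pow_zero, pow_one, pow_two, mul_one,
    ← mul_assoc]
  exact key_triple a _
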